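/- Let X ~ Binom(n, θ₀) and N ~ Tulap(0, b, q) be independent, Z = X + N, and define p(θ₀, Z) = P_{X'~Binom(n,θ₀), N'~Tulap(0,b,q)}(X' + N' ≥ Z | Z). Then p(θ₀, Z) is uniformly distributed on [0,1]. Consequently, for X ~ Binom(n, θ) with θ ≤ θ₀, P(p(θ₀, X + N) ≤ α) ≤ α for all α ∈ [0,1]. -/

import Mathlib

open MeasureTheory Set Filter Topology

namespace Stmt15

noncomputable def tf (b t : ℝ) : ℝ := (1 - b) / (1 + b) * b ^ (round t).natAbs

noncomputable def tF (b x : ℝ) : ℝ :=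
  ∑' l : ℤ, ((1 - b) / (1 + b)) * b ^ l.natAbs * max 0 (min 1 (x - l + 1 / 2))

noncomputable def tg (b q t : ℝ) : ℝ :=
  if q / 2 ≤ tF b t ∧ tF b t ≤ 1 - q / 2 then ((1 - b) / (1 + b)) * b ^ (round t).natAbs / (1 - q) else 0

noncomputable def tFN (b q x : ℝ) : ℝ := max 0 (min 1 ((tF b x - q / 2) / (1 - q)))

variable {b q : ℝ}

lemma c_pos (hb0 : 0 < b) (hb1 : b < 1) : 0 < (1 - b) / (1 + b) := by
  apply div_pos <;> linarith

lemma hasSum_geom_int (hb0 : 0 < b) (hb1 : b < 1) :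
    HasSum (fun l : ℤ => b ^ l.natAbs) ((1 + b) / (1 - b)) := by
  have h1 : HasSum (fun n : ℕ => b ^ ((n : ℤ)).natAbs) (1 - b)⁻¹ := by
    have he : (fun n : ℕ => b ^ ((n : ℤ)).natAbs) = fun n : ℕ => b ^ n := by
      funext n; rw [Int.natAbs_natCast]
    rw [he]
    exact hasSum_geometric_of_lt_one hb0.le hb1
  have h2 : HasSum (fun n : ℕ => b ^ (-((n : ℤ) + 1)).natAbs) (b * (1 - b)⁻¹) := by
    have := (hasSum_geometric_of_lt_one hb0.le hb1).mul_left b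
    have he : (fun n : ℕ => b ^ (-((n : ℤ) + 1)).natAbs) = fun n : ℕ => b * b ^ n := by
      funext n
      have hn : (-((n : ℤ) + 1)).natAbs = n + 1 := by omega
      rw [hn, pow_succ]; ring
    rw [he]
    exact this
  have := HasSum.of_nat_of_neg_add_one (f := fun l : ℤ => b ^ l.natAbs) h1 h2
  convert this using 1
  have hb1' : (1 : ℝ) - b ≠ 0 := by linarith
  field_simp

lemma summable_geom_int (hb0 : 0 < b) (hb1 : b < 1) :
    Summable (fun l : ℤ => b ^ l.natAbs) := (hasSum_geom_int hb0 hb1).summable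

lemma tsum_geom_int (hb0 : 0 < b) (hb1 : b < 1) :
    ∑' l : ℤ, b ^ l.natAbs = (1 + b) / (1 - b) := (hasSum_geom_int hb0 hb1).tsum_eq

lemma clamp_mem (x : ℝ) : max 0 (min 1 x) ∈ Icc (0:ℝ) 1 := by
  constructor
  · exact le_max_left _ _
  · exact max_le (by norm_num) (min_le_left _ _)

lemma summable_tF_term (hb0 : 0 < b) (hb1 : b < 1) (x : ℝ) :
    Summable (fun l : ℤ => ((1 - b) / (1 + b)) * b ^ l.natAbs * max 0 (min 1 (x - l + 1 / 2))) := by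
  have hc := c_pos hb0 hb1
  apply Summable.of_nonneg_of_le (fun l => ?_) (fun l => ?_)
    (((summable_geom_int hb0 hb1).mul_left ((1 - b) / (1 + b))))
  · have := (clamp_mem (x - l + 1/2)).1
    positivity
  · have h := (clamp_mem (x - l + 1/2)).2
    have hb : (0:ℝ) ≤ ((1 - b) / (1 + b)) * b ^ l.natAbs := by positivity
    calc ((1 - b) / (1 + b)) * b ^ l.natAbs * max 0 (min 1 (x - l + 1 / 2))
        ≤ ((1 - b) / (1 + b)) * b ^ l.natAbs * 1 := by
          exact mul_le_mul_of_nonneg_left h hb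
      _ = ((1 - b) / (1 + b)) * b ^ l.natAbs := mul_one _

lemma tF_nonneg (hb0 : 0 < b) (hb1 : b < 1) (x : ℝ) : 0 ≤ tF b x := by
  apply tsum_nonneg
  intro l
  have := (clamp_mem (x - l + 1/2)).1
  have hc := c_pos hb0 hb1
  positivity

lemma tF_mono (hb0 : 0 < b) (hb1 : b < 1) : Monotone (tF b) := by
  intro x y hxy
  apply Summable.tsum_le_tsum _ (summable_tF_term hb0 hb1 x) (summable_tF_term hb0 hb1 y)
  intro l
  have hc := c_pos hb0 hb1
  have hcb : (0:ℝ) ≤ ((1 - b) / (1 + b)) * b ^ l.natAbs := by positivity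
  apply mul_le_mul_of_nonneg_left _ hcb
  apply max_le_max le_rfl
  apply min_le_min le_rfl
  linarith

lemma tF_continuous (hb0 : 0 < b) (hb1 : b < 1) : Continuous (tF b) := by
  apply continuous_tsum (u := fun l : ℤ => ((1 - b) / (1 + b)) * b ^ l.natAbs)
  · intro l
    apply Continuous.mul continuous_const
    apply Continuous.max continuous_const
    apply Continuous.min continuous_const
    continuity
  · exact (summable_geom_int hb0 hb1).mul_left _
  · intro l x
    have hc := c_pos hb0 hb1
    have h0 := (clamp_mem (x - l + 1/2)).1
    have h1 := (clamp_mem (x - l + 1/2)).2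
    rw [Real.norm_eq_abs, abs_of_nonneg (by positivity)]
    have hcb : (0:ℝ) ≤ ((1 - b) / (1 + b)) * b ^ l.natAbs := by positivity
    nlinarith

lemma measurable_tf (b : ℝ) : Measurable (fun t => ENNReal.ofReal (tf b t)) := by
  apply ENNReal.measurable_ofReal.comp
  have : Measurable (fun t : ℝ => round t) := by
    have : (fun t : ℝ => round t) = fun t => ⌊t + 1/2⌋ := by
      funext t; exact round_eq t
    rw [this]
    exact Int.measurable_floor.comp (measurable_add_const _)
  exact (measurable_of_countable (fun k : ℤ => (1 - b) / (1 + b) * b ^ k.natAbs)).comp this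




lemma round_eq_of_mem {t : ℝ} {l : ℤ} (h : t ∈ Ico ((l:ℝ) - 1/2) ((l:ℝ) + 1/2)) :
    round t = l := by
  rw [round_eq, Int.floor_eq_iff]
  obtain ⟨h1, h2⟩ := h
  constructor
  · push_cast; linarith
  · push_cast; linarith

lemma mem_round_box (t : ℝ) : t ∈ Ico ((round t : ℝ) - 1/2) ((round t : ℝ) + 1/2) := by
  have h1 : (round t : ℝ) ≤ t + 1/2 := by rw [round_eq]; exact Int.floor_le _
  have h2 : t + 1/2 < (round t : ℝ) + 1 := by rw [round_eq]; exact Int.lt_floor_add_one _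
  constructor <;> [linarith; linarith]

lemma lintegral_tf_set (hb0 : 0 < b) (hb1 : b < 1) {s : Set ℝ} (hs : MeasurableSet s) :
    ∫⁻ t in s, ENNReal.ofReal (tf b t) =
      ∑' l : ℤ, ENNReal.ofReal (((1 - b) / (1 + b)) * b ^ l.natAbs) *
        volume (s ∩ Ico ((l:ℝ) - 1/2) ((l:ℝ) + 1/2)) := by
  have hU : (⋃ l : ℤ, s ∩ Ico ((l:ℝ) - 1/2) ((l:ℝ) + 1/2)) = s := by
    apply Subset.antisymm
    · exact iUnion_subset fun l => inter_subset_left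
    · intro t ht
      exact mem_iUnion.mpr ⟨round t, ht, mem_round_box t⟩
  have hd : Pairwise (Function.onFun Disjoint fun l : ℤ => s ∩ Ico ((l:ℝ) - 1/2) ((l:ℝ) + 1/2)) := by
    intro l l' hll'
    simp only [Function.onFun, disjoint_iff_inter_eq_empty]
    ext t
    simp only [mem_inter_iff, mem_empty_iff_false, iff_false]
    rintro ⟨⟨_, h1⟩, _, h2⟩
    exact hll' ((round_eq_of_mem h1).symm.trans (round_eq_of_mem h2))
  have hm : ∀ l : ℤ, MeasurableSet (s ∩ Ico ((l:ℝ) - 1/2) ((l:ℝ) + 1/2)) :=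
    fun l => hs.inter measurableSet_Ico
  have hlu := lintegral_iUnion (μ := volume) hm hd (fun t => ENNReal.ofReal (tf b t))
  rw [hU] at hlu
  rw [hlu]
  congr 1
  funext l
  rw [setLIntegral_congr_fun (hm l)
    (fun t ht => show ENNReal.ofReal (tf b t) =
      ENNReal.ofReal (((1 - b) / (1 + b)) * b ^ l.natAbs) by
        rw [tf, round_eq_of_mem ht.2]), setLIntegral_const]

lemma vol_Iic_inter (y : ℝ) (l : ℤ) :
    volume (Iic y ∩ Ico ((l:ℝ) - 1/2) ((l:ℝ) + 1/2)) =
      ENNReal.ofReal (max 0 (min 1 (y - l + 1/2))) := by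
  rcases lt_or_ge y ((l:ℝ) - 1/2) with h | h
  · have he : Iic y ∩ Ico ((l:ℝ) - 1/2) ((l:ℝ) + 1/2) = ∅ := by
      apply eq_empty_iff_forall_notMem.mpr
      rintro t ⟨ht, h2, h3⟩
      rw [mem_Iic] at ht
      linarith
    rw [he, measure_empty]
    rw [max_eq_left, ENNReal.ofReal_zero]
    rw [min_eq_right] <;> linarith
  · rcases lt_or_ge y ((l:ℝ) + 1/2) with h2 | h2
    · have he : Iic y ∩ Ico ((l:ℝ) - 1/2) ((l:ℝ) + 1/2) = Icc ((l:ℝ) - 1/2) y := by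
        ext t
        simp only [mem_inter_iff, mem_Iic, mem_Ico, mem_Icc]
        constructor
        · rintro ⟨ht, h3, _⟩; exact ⟨h3, ht⟩
        · rintro ⟨h3, ht⟩; exact ⟨ht, h3, by linarith⟩
      rw [he, Real.volume_Icc]
      congr 1
      rw [min_eq_right (by linarith), max_eq_right (by linarith)]
      ring
    · have he : Iic y ∩ Ico ((l:ℝ) - 1/2) ((l:ℝ) + 1/2) = Ico ((l:ℝ) - 1/2) ((l:ℝ) + 1/2) := by
        apply inter_eq_self_of_subset_right
        intro t ht
        exact le_trans ht.2.le h2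
      rw [he, Real.volume_Ico]
      congr 1
      rw [min_eq_left (by linarith), max_eq_right (by norm_num)]
      ring

lemma lintegral_tf_Iic (hb0 : 0 < b) (hb1 : b < 1) (y : ℝ) :
    ∫⁻ t in Iic y, ENNReal.ofReal (tf b t) = ENNReal.ofReal (tF b y) := by
  rw [lintegral_tf_set hb0 hb1 measurableSet_Iic]
  have hc := c_pos hb0 hb1
  calc ∑' l : ℤ, ENNReal.ofReal (((1 - b) / (1 + b)) * b ^ l.natAbs) *
        volume (Iic y ∩ Ico ((l:ℝ) - 1/2) ((l:ℝ) + 1/2))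
      = ∑' l : ℤ, ENNReal.ofReal (((1 - b) / (1 + b)) * b ^ l.natAbs *
          max 0 (min 1 (y - l + 1/2))) := by
        congr 1; funext l
        rw [vol_Iic_inter, ← ENNReal.ofReal_mul (by positivity)]
    _ = ENNReal.ofReal (tF b y) := by
        rw [← ENNReal.ofReal_tsum_of_nonneg, tF]
        · intro l
          have := (clamp_mem (y - l + 1/2)).1
          positivity
        · exact summable_tF_term hb0 hb1 y

lemma lintegral_tf_univ (hb0 : 0 < b) (hb1 : b < 1) :
    ∫⁻ t, ENNReal.ofReal (tf b t) = 1 := by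
  rw [← setLIntegral_univ, lintegral_tf_set hb0 hb1 MeasurableSet.univ]
  have hc := c_pos hb0 hb1
  have hb1' : (0:ℝ) < 1 - b := by linarith
  have hb2' : (0:ℝ) < 1 + b := by linarith
  calc ∑' l : ℤ, ENNReal.ofReal (((1 - b) / (1 + b)) * b ^ l.natAbs) *
        volume (univ ∩ Ico ((l:ℝ) - 1/2) ((l:ℝ) + 1/2))
      = ∑' l : ℤ, ENNReal.ofReal (((1 - b) / (1 + b)) * b ^ l.natAbs) := by
        congr 1; funext l
        rw [univ_inter, Real.volume_Ico]
        have : (l:ℝ) + 1/2 - ((l:ℝ) - 1/2) = 1 := by ring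
        rw [this, ENNReal.ofReal_one, mul_one]
    _ = ENNReal.ofReal (∑' l : ℤ, ((1 - b) / (1 + b)) * b ^ l.natAbs) := by
        rw [ENNReal.ofReal_tsum_of_nonneg]
        · intro l; positivity
        · exact (summable_geom_int hb0 hb1).mul_left _
    _ = 1 := by
        rw [tsum_mul_left, tsum_geom_int hb0 hb1]
        rw [show (1 - b) / (1 + b) * ((1 + b) / (1 - b)) = 1 by field_simp]
        exact ENNReal.ofReal_one

lemma tF_le_one (hb0 : 0 < b) (hb1 : b < 1) (y : ℝ) : tF b y ≤ 1 := by
  have h : ENNReal.ofReal (tF b y) ≤ 1 := by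
    have hmono : ∫⁻ t in Iic y, ENNReal.ofReal (tf b t) ≤ ∫⁻ t, ENNReal.ofReal (tf b t) := by
      exact (lintegral_mono_set (subset_univ _)).trans_eq (setLIntegral_univ _)
    rw [lintegral_tf_Iic hb0 hb1, lintegral_tf_univ hb0 hb1] at hmono
    exact hmono
  exact ENNReal.ofReal_le_one.mp h

lemma tF_strictMono (hb0 : 0 < b) (hb1 : b < 1) : StrictMono (tF b) := by
  intro y y' h
  have hsplit : ENNReal.ofReal (tF b y') =
      ENNReal.ofReal (tF b y) + ∫⁻ t in Ioc y y', ENNReal.ofReal (tf b t) := by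
    rw [← lintegral_tf_Iic hb0 hb1, ← lintegral_tf_Iic hb0 hb1,
      ← Iic_union_Ioc_eq_Iic h.le, lintegral_union measurableSet_Ioc (Iic_disjoint_Ioc le_rfl)]
  have hpos : 0 < ∫⁻ t in Ioc y y', ENNReal.ofReal (tf b t) := by
    rw [lintegral_pos_iff_support (measurable_tf b)]
    have hsupp : (Function.support fun t => ENNReal.ofReal (tf b t)) = univ := by
      ext t
      simp only [Function.mem_support, mem_univ, iff_true]
      have hc := c_pos hb0 hb1
      have : 0 < tf b t := by rw [tf]; positivity
      exact (ENNReal.ofReal_pos.mpr this).ne'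
    rw [hsupp, Measure.restrict_apply MeasurableSet.univ, univ_inter, Real.volume_Ioc]
    rw [ENNReal.ofReal_pos]
    linarith
  by_contra hcon
  push_neg at hcon
  have hle : ENNReal.ofReal (tF b y') ≤ ENNReal.ofReal (tF b y) :=
    ENNReal.ofReal_le_ofReal hcon
  rw [hsplit] at hle
  have : (∫⁻ t in Ioc y y', ENNReal.ofReal (tf b t)) = 0 := by
    have h2 : ENNReal.ofReal (tF b y) + (∫⁻ t in Ioc y y', ENNReal.ofReal (tf b t)) ≤
        ENNReal.ofReal (tF b y) + 0 := by simpa using hle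
    have := (ENNReal.add_le_add_iff_left ENNReal.ofReal_ne_top).mp h2
    exact le_zero_iff.mp this
  rw [this] at hpos
  exact lt_irrefl _ hpos

noncomputable def muF (b : ℝ) : Measure ℝ :=
  volume.withDensity fun t => ENNReal.ofReal (tf b t)

lemma muF_Iic (hb0 : 0 < b) (hb1 : b < 1) (y : ℝ) :
    muF b (Iic y) = ENNReal.ofReal (tF b y) := by
  rw [muF, withDensity_apply _ measurableSet_Iic, lintegral_tf_Iic hb0 hb1]

lemma muF_univ (hb0 : 0 < b) (hb1 : b < 1) : muF b univ = 1 := by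
  rw [muF, withDensity_apply _ MeasurableSet.univ, setLIntegral_univ, lintegral_tf_univ hb0 hb1]

lemma tF_tendsto_atTop (hb0 : 0 < b) (hb1 : b < 1) : Tendsto (tF b) atTop (𝓝 1) := by
  have h := tendsto_measure_Iic_atTop (muF b)
  rw [muF_univ hb0 hb1] at h
  have h2 := (ENNReal.tendsto_toReal (a := 1) (by norm_num)).comp h
  simp only [ENNReal.toReal_one] at h2
  convert h2 using 1
  funext y
  simp only [Function.comp_apply, muF_Iic hb0 hb1, ENNReal.toReal_ofReal (tF_nonneg hb0 hb1 y)]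

lemma muF_Ioc_ne_top (hb0 : 0 < b) (hb1 : b < 1) (y z : ℝ) : muF b (Ioc y z) ≠ ⊤ := by
  have h : muF b (Ioc y z) ≤ muF b (Iic z) := measure_mono Ioc_subset_Iic_self
  rw [muF_Iic hb0 hb1] at h
  exact ne_top_of_le_ne_top ENNReal.ofReal_ne_top h

lemma tF_tendsto_atBot (hb0 : 0 < b) (hb1 : b < 1) : Tendsto (tF b) atBot (𝓝 0) := by
  have h := tendsto_measure_Ioc_atBot (muF b) (0:ℝ)
  rw [muF_Iic hb0 hb1] at h
  have hne : ENNReal.ofReal (tF b 0) ≠ ⊤ := ENNReal.ofReal_ne_top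
  have h2 := (ENNReal.tendsto_toReal hne).comp h
  rw [ENNReal.toReal_ofReal (tF_nonneg hb0 hb1 0)] at h2
  have h3 : Tendsto (fun y => tF b 0 - (muF b (Ioc y 0)).toReal) atBot (𝓝 (tF b 0 - tF b 0)) :=
    (tendsto_const_nhds).sub h2
  rw [sub_self] at h3
  apply h3.congr'
  filter_upwards [eventually_le_atBot (0:ℝ)] with y hy
  have hsplit : muF b (Iic 0) = muF b (Iic y) + muF b (Ioc y 0) := by
    rw [← Iic_union_Ioc_eq_Iic hy, measure_union (Iic_disjoint_Ioc le_rfl) measurableSet_Ioc]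
  have hIfin : muF b (Iic y) ≠ ⊤ := by rw [muF_Iic hb0 hb1]; exact ENNReal.ofReal_ne_top
  have hOfin : muF b (Ioc y 0) ≠ ⊤ := muF_Ioc_ne_top hb0 hb1 y 0
  have := congrArg ENNReal.toReal hsplit
  rw [ENNReal.toReal_add hIfin hOfin, muF_Iic hb0 hb1, muF_Iic hb0 hb1,
    ENNReal.toReal_ofReal (tF_nonneg hb0 hb1 0), ENNReal.toReal_ofReal (tF_nonneg hb0 hb1 y)] at this
  linarith



lemma tf_nonneg (hb0 : 0 < b) (hb1 : b < 1) (t : ℝ) : 0 ≤ tf b t := by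
  have hc := c_pos hb0 hb1
  rw [tf]; positivity

lemma measurable_tf_real (b : ℝ) : Measurable (tf b) := by
  have hr : Measurable (fun t : ℝ => round t) := by
    have : (fun t : ℝ => round t) = fun t => ⌊t + 1/2⌋ := by
      funext t; exact round_eq t
    rw [this]
    exact Int.measurable_floor.comp (measurable_add_const _)
  exact (measurable_of_countable (fun k : ℤ => (1 - b) / (1 + b) * b ^ k.natAbs)).comp hr

lemma measurableSet_A (hb0 : 0 < b) (hb1 : b < 1) (q : ℝ) :
    MeasurableSet {t : ℝ | q / 2 ≤ tF b t ∧ tF b t ≤ 1 - q / 2} := by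
  have h1 : IsClosed {t : ℝ | q / 2 ≤ tF b t} :=
    isClosed_le continuous_const (tF_continuous hb0 hb1)
  have h2 : IsClosed {t : ℝ | tF b t ≤ 1 - q / 2} :=
    isClosed_le (tF_continuous hb0 hb1) continuous_const
  exact (h1.inter h2).measurableSet

lemma measurable_tg (hb0 : 0 < b) (hb1 : b < 1) :
    Measurable (fun t => ENNReal.ofReal (tg b q t)) := by
  apply ENNReal.measurable_ofReal.comp
  have he : tg b q = fun t => if q / 2 ≤ tF b t ∧ tF b t ≤ 1 - q / 2 then tf b t / (1 - q) else 0 := by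
    funext t; rw [tg, tf]
  rw [he]
  exact Measurable.ite (measurableSet_A hb0 hb1 q) ((measurable_tf_real b).div_const _)
    measurable_const

lemma tFN_nonneg (x : ℝ) : 0 ≤ tFN b q x := le_max_left _ _

lemma tFN_le_one (x : ℝ) : tFN b q x ≤ 1 := max_le zero_le_one (min_le_left _ _)

lemma tFN_mono (hb0 : 0 < b) (hb1 : b < 1) (hq1 : q < 1) : Monotone (tFN b q) := by
  intro x y hxy
  have h1q : (0:ℝ) < 1 - q := by linarith
  apply max_le_max le_rfl
  apply min_le_min le_rfl
  apply (div_le_div_iff_of_pos_right h1q).mpr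
  have := tF_mono hb0 hb1 hxy
  linarith

lemma tFN_continuous (hb0 : 0 < b) (hb1 : b < 1) : Continuous (tFN b q) := by
  apply Continuous.max continuous_const
  apply Continuous.min continuous_const
  exact ((tF_continuous hb0 hb1).sub continuous_const).div_const _

lemma tFN_eq_one (hq1 : q < 1) {y : ℝ} (h : 1 - q / 2 ≤ tF b y) : tFN b q y = 1 := by
  have h1q : (0:ℝ) < 1 - q := by linarith
  rw [tFN, min_eq_left, max_eq_right zero_le_one]
  rw [le_div_iff₀ h1q]
  linarith

lemma exists_tF_eq (hb0 : 0 < b) (hb1 : b < 1) {v : ℝ} (h0 : 0 < v) (h1 : v < 1) :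
    ∃ a, tF b a = v := by
  obtain ⟨y1, hy1⟩ := ((tF_tendsto_atBot hb0 hb1).eventually_lt_const h0).exists
  obtain ⟨y2, hy2⟩ := ((tF_tendsto_atTop hb0 hb1).eventually_const_lt h1).exists
  have hy12 : y1 ≤ y2 := by
    by_contra hc
    push_neg at hc
    have := tF_mono hb0 hb1 hc.le
    linarith
  obtain ⟨a, _, ha⟩ := intermediate_value_Icc hy12 (tF_continuous hb0 hb1).continuousOn
    ⟨hy1.le, hy2.le⟩
  exact ⟨a, ha⟩

lemma tg_zero (hb0 : 0 < b) (hb1 : b < 1) : tg b 0 = tf b := by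
  funext t
  have h1 : (0:ℝ)/2 ≤ tF b t := by rw [zero_div]; exact tF_nonneg hb0 hb1 t
  have h2 : tF b t ≤ 1 - (0:ℝ)/2 := by rw [zero_div, sub_zero]; exact tF_le_one hb0 hb1 t
  rw [tg, if_pos ⟨h1, h2⟩, sub_zero, div_one, tf]

lemma lintegral_tf_Icc (hb0 : 0 < b) (hb1 : b < 1) {a y : ℝ} (h : a ≤ y) :
    ∫⁻ t in Icc a y, ENNReal.ofReal (tf b t) = ENNReal.ofReal (tF b y - tF b a) := by
  have hae : (volume : Measure ℝ).restrict (Icc a y) = volume.restrict (Ioc a y) :=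
    Measure.restrict_congr_set Ioc_ae_eq_Icc.symm
  have h1 : ∫⁻ t in Icc a y, ENNReal.ofReal (tf b t) =
      ∫⁻ t in Ioc a y, ENNReal.ofReal (tf b t) := by rw [hae]
  have hsplit : ENNReal.ofReal (tF b y) =
      ENNReal.ofReal (tF b a) + ∫⁻ t in Ioc a y, ENNReal.ofReal (tf b t) := by
    rw [← lintegral_tf_Iic hb0 hb1, ← lintegral_tf_Iic hb0 hb1,
      ← Iic_union_Ioc_eq_Iic h, lintegral_union measurableSet_Ioc (Iic_disjoint_Ioc le_rfl)]
  rw [add_comm] at hsplit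
  have h2 := ENNReal.eq_sub_of_add_eq ENNReal.ofReal_ne_top hsplit.symm
  rw [h1, h2, ENNReal.ofReal_sub _ (tF_nonneg hb0 hb1 a)]

lemma lintegral_tg_Iic (hb0 : 0 < b) (hb1 : b < 1) (hq0 : 0 ≤ q) (hq1 : q < 1) (y : ℝ) :
    ∫⁻ t in Iic y, ENNReal.ofReal (tg b q t) = ENNReal.ofReal (tFN b q y) := by
  have h1q : (0:ℝ) < 1 - q := by linarith
  rcases eq_or_lt_of_le hq0 with hq | hq
  · subst hq
    have htFN : tFN b 0 y = tF b y := by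
      rw [tFN]
      simp only [zero_div, sub_zero, div_one]
      rw [min_eq_right (tF_le_one hb0 hb1 y), max_eq_right (tF_nonneg hb0 hb1 y)]
    rw [tg_zero hb0 hb1, htFN, lintegral_tf_Iic hb0 hb1]
  · obtain ⟨a, ha⟩ := exists_tF_eq hb0 hb1 (v := q/2) (by linarith) (by linarith)
    obtain ⟨a', ha'⟩ := exists_tF_eq hb0 hb1 (v := 1 - q/2) (by linarith) (by linarith)
    have haa' : a < a' := by
      apply (tF_strictMono hb0 hb1).lt_iff_lt.mp
      rw [ha, ha']; linarith
    have hA : ∀ t, (q/2 ≤ tF b t ∧ tF b t ≤ 1 - q/2) ↔ t ∈ Icc a a' := by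
      intro t
      constructor
      · rintro ⟨h1, h2⟩
        constructor
        · by_contra hc
          push_neg at hc
          have := tF_strictMono hb0 hb1 hc
          rw [ha] at this; linarith
        · by_contra hc
          push_neg at hc
          have := tF_strictMono hb0 hb1 hc
          rw [ha'] at this; linarith
      · rintro ⟨h1, h2⟩
        exact ⟨ha ▸ tF_mono hb0 hb1 h1, ha' ▸ tF_mono hb0 hb1 h2⟩
    have htg : ∀ t, ENNReal.ofReal (tg b q t) =
        (Icc a a').indicator (fun t => ENNReal.ofReal (tf b t) * ENNReal.ofReal ((1-q)⁻¹)) t := by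
      intro t
      rw [tg]
      by_cases ht : t ∈ Icc a a'
      · rw [if_pos ((hA t).mpr ht), indicator_of_mem ht, ← ENNReal.ofReal_mul (tf_nonneg hb0 hb1 t),
          ← div_eq_mul_inv, tf]
      · rw [if_neg (fun hc => ht ((hA t).mp hc)), indicator_of_notMem ht, ENNReal.ofReal_zero]
    simp_rw [htg]
    rw [lintegral_indicator measurableSet_Icc, Measure.restrict_restrict measurableSet_Icc,
      lintegral_mul_const _ (measurable_tf b)]
    rcases lt_or_ge y a with hy | hy
    · have he : Icc a a' ∩ Iic y = ∅ := by
        apply eq_empty_iff_forall_notMem.mpr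
        rintro t ⟨⟨ht1, _⟩, ht2⟩
        rw [mem_Iic] at ht2
        linarith
      rw [he]
      have htFN0 : tFN b q y = 0 := by
        have hle : tF b y < q/2 := by
          have := tF_strictMono hb0 hb1 hy
          rw [ha] at this; linarith
        rw [tFN, max_eq_left]
        apply le_trans (min_le_right _ _)
        apply div_nonpos_of_nonpos_of_nonneg <;> linarith
      rw [htFN0, ENNReal.ofReal_zero]
      simp
    · rcases le_or_gt y a' with hy2 | hy2
      · have he : Icc a a' ∩ Iic y = Icc a y := by
          ext t
          simp only [mem_inter_iff, mem_Icc, mem_Iic]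
          constructor
          · rintro ⟨⟨t1, _⟩, t2⟩; exact ⟨t1, t2⟩
          · rintro ⟨t1, t2⟩; exact ⟨⟨t1, by linarith⟩, t2⟩
        rw [he, lintegral_tf_Icc hb0 hb1 hy, ha,
          ← ENNReal.ofReal_mul (by have := tF_mono hb0 hb1 hy; rw [ha] at this; linarith)]
        congr 1
        have hnum0 : 0 ≤ tF b y - q/2 := by
          have := tF_mono hb0 hb1 hy; rw [ha] at this; linarith
        have hnum1 : tF b y - q/2 ≤ 1 - q := by
          have := tF_mono hb0 hb1 hy2; rw [ha'] at this; linarith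
        have hminmax : tFN b q y = (tF b y - q/2)/(1-q) := by
          rw [tFN, min_eq_right (by rw [div_le_one h1q]; exact hnum1),
            max_eq_right (div_nonneg hnum0 h1q.le)]
        rw [hminmax]
        ring
      · have he : Icc a a' ∩ Iic y = Icc a a' := by
          apply inter_eq_self_of_subset_left
          intro t ht
          exact le_trans ht.2 (by linarith)
        rw [he, lintegral_tf_Icc hb0 hb1 haa'.le, ha, ha',
          ← ENNReal.ofReal_mul (by linarith)]
        congr 1
        have hey : 1 - q/2 ≤ tF b y := by
          have := tF_mono hb0 hb1 hy2.le
          rw [ha'] at this; linarith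
        have heq : (1 - q/2 - q/2) = 1 - q := by ring
        rw [heq, tFN_eq_one hq1 hey, mul_inv_cancel₀ (by linarith)]

noncomputable def mug (b q : ℝ) : Measure ℝ :=
  volume.withDensity fun t => ENNReal.ofReal (tg b q t)

lemma mug_Iic (hb0 : 0 < b) (hb1 : b < 1) (hq0 : 0 ≤ q) (hq1 : q < 1) (y : ℝ) :
    mug b q (Iic y) = ENNReal.ofReal (tFN b q y) := by
  rw [mug, withDensity_apply _ measurableSet_Iic, lintegral_tg_Iic hb0 hb1 hq0 hq1]

lemma lintegral_tg_univ (hb0 : 0 < b) (hb1 : b < 1) (hq0 : 0 ≤ q) (hq1 : q < 1) :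
    ∫⁻ t, ENNReal.ofReal (tg b q t) = 1 := by
  have huniv : mug b q univ = ∫⁻ t, ENNReal.ofReal (tg b q t) := by
    rw [mug, withDensity_apply _ MeasurableSet.univ, setLIntegral_univ]
  have h := tendsto_measure_Iic_atTop (mug b q)
  rcases eq_or_lt_of_le hq0 with hq | hq
  · have h0 : (0:ℝ) = q := hq
    rw [← h0] at *
    rw [tg_zero hb0 hb1]
    exact lintegral_tf_univ hb0 hb1
  · have hev : ∀ᶠ y in atTop, mug b q (Iic y) = 1 := by
      filter_upwards [(tF_tendsto_atTop hb0 hb1).eventually_const_lt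
        (show 1 - q/2 < 1 by linarith)] with y hy
      rw [mug_Iic hb0 hb1 hq0 hq1, tFN_eq_one hq1 hy.le, ENNReal.ofReal_one]
    have h2 : Tendsto (fun y => mug b q (Iic y)) atTop (𝓝 1) :=
      Tendsto.congr' (by filter_upwards [hev] with y hy; exact hy.symm) tendsto_const_nhds
    rw [← huniv]
    exact tendsto_nhds_unique h h2

noncomputable def pm (n : ℕ) (θ : ℝ) (x : ℕ) : ℝ :=
  (n.choose x : ℝ) * θ ^ x * (1 - θ) ^ (n - x)

lemma pm_nonneg {n x : ℕ} {θ : ℝ} (h0 : 0 ≤ θ) (h1 : θ ≤ 1) : 0 ≤ pm n θ x := by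
  have h2 : (0:ℝ) ≤ 1 - θ := by linarith
  rw [pm]; positivity

lemma pm_sum_one (n : ℕ) (θ : ℝ) : ∑ x ∈ Finset.range (n + 1), pm n θ x = 1 := by
  calc ∑ x ∈ Finset.range (n + 1), pm n θ x
      = ∑ x ∈ Finset.range (n + 1), θ ^ x * (1 - θ) ^ (n - x) * (n.choose x : ℝ) :=
        Finset.sum_congr rfl (fun x _ => by rw [pm]; ring)
    _ = (θ + (1 - θ)) ^ n := (add_pow θ (1 - θ) n).symm
    _ = 1 := by rw [add_sub_cancel, one_pow]

lemma pm_succ_eq {n x : ℕ} (θ : ℝ) (hx : x ≤ n) :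
    pm (n + 1) θ (x + 1) = θ * pm n θ x + (1 - θ) * pm n θ (x + 1) := by
  rcases eq_or_lt_of_le hx with h | h
  · subst h
    simp only [pm, Nat.succ_sub_succ, Nat.choose_succ_self, Nat.choose_self, Nat.sub_self,
      pow_zero, Nat.cast_zero, Nat.cast_one]
    ring
  · have h1 : n - x = (n - (x + 1)) + 1 := by omega
    simp only [pm, Nat.succ_sub_succ, Nat.choose_succ_succ']
    push_cast
    rw [h1, pow_succ]
    ring

lemma pm_rec (n : ℕ) (θ : ℝ) (g : ℕ → ℝ) :
    ∑ x ∈ Finset.range (n + 2), pm (n + 1) θ x * g x =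
      (1 - θ) * ∑ x ∈ Finset.range (n + 1), pm n θ x * g x
        + θ * ∑ x ∈ Finset.range (n + 1), pm n θ x * g (x + 1) := by
  rw [Finset.sum_range_succ' (fun x => pm (n + 1) θ x * g x) (n + 1)]
  have hterm : ∀ x ∈ Finset.range (n + 1), pm (n + 1) θ (x + 1) * g (x + 1) =
      θ * (pm n θ x * g (x + 1)) + (1 - θ) * (pm n θ (x + 1) * g (x + 1)) := by
    intro x hx
    rw [Finset.mem_range] at hx
    rw [pm_succ_eq θ (by omega)]
    ring
  rw [Finset.sum_congr rfl hterm, Finset.sum_add_distrib, ← Finset.mul_sum, ← Finset.mul_sum]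
  have hshift : ∑ x ∈ Finset.range (n + 1), pm n θ (x + 1) * g (x + 1) =
      ∑ x ∈ Finset.range (n + 1), pm n θ x * g x - pm n θ 0 * g 0 := by
    have hlast : pm n θ (n + 1) = 0 := by
      rw [pm, Nat.choose_succ_self]
      norm_num
    rw [Finset.sum_range_succ (fun x => pm n θ (x + 1) * g (x + 1)) n, hlast]
    rw [Finset.sum_range_succ' (fun x => pm n θ x * g x) n]
    ring
  rw [hshift]
  have h0 : pm (n + 1) θ 0 = (1 - θ) * pm n θ 0 := by
    simp only [pm, Nat.choose_zero_right, Nat.sub_zero, pow_zero, Nat.cast_one]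
    rw [pow_succ]
    ring
  rw [h0]
  ring

lemma pm_sum_antitone (n : ℕ) {θ θ' : ℝ} (h0 : 0 ≤ θ) (hθ : θ ≤ θ') (h1 : θ' ≤ 1)
    {g : ℕ → ℝ} (hg : ∀ k, g (k + 1) ≤ g k) :
    ∑ x ∈ Finset.range (n + 1), pm n θ' x * g x ≤
      ∑ x ∈ Finset.range (n + 1), pm n θ x * g x := by
  induction n generalizing g with
  | zero => simp [pm]
  | succ n ih =>
    rw [show n + 1 + 1 = n + 2 from rfl, pm_rec, pm_rec]
    have h0' : 0 ≤ θ' := le_trans h0 hθ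
    have h1' : θ ≤ 1 := le_trans hθ h1
    have hsucc : ∀ k, g (k + 1 + 1) ≤ g (k + 1) := fun k => hg (k + 1)
    have hstep1 : ∑ x ∈ Finset.range (n + 1), pm n θ' x * g (x + 1) ≤
        ∑ x ∈ Finset.range (n + 1), pm n θ' x * g x := by
      apply Finset.sum_le_sum
      intro x _
      exact mul_le_mul_of_nonneg_left (hg x) (pm_nonneg h0' h1)
    have hmix : (1 - θ') * ∑ x ∈ Finset.range (n + 1), pm n θ' x * g x
          + θ' * ∑ x ∈ Finset.range (n + 1), pm n θ' x * g (x + 1) ≤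
        (1 - θ) * ∑ x ∈ Finset.range (n + 1), pm n θ' x * g x
          + θ * ∑ x ∈ Finset.range (n + 1), pm n θ' x * g (x + 1) := by
      nlinarith [hstep1, hθ]
    apply le_trans hmix
    have hA := ih hg
    have hB := ih (g := fun k => g (k + 1)) hsucc
    have hc1 : (0:ℝ) ≤ 1 - θ := by linarith
    apply add_le_add
    · exact mul_le_mul_of_nonneg_left hA hc1
    · exact mul_le_mul_of_nonneg_left hB h0

lemma tg_nonneg (hb0 : 0 < b) (hb1 : b < 1) (hq1 : q < 1) (t : ℝ) : 0 ≤ tg b q t := by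
  rw [tg]
  split_ifs
  · have hc := c_pos hb0 hb1
    have h1q : (0:ℝ) < 1 - q := by linarith
    positivity
  · exact le_refl 0

lemma tFN_tendsto_atTop (hb0 : 0 < b) (hb1 : b < 1) (hq0 : 0 ≤ q) (hq1 : q < 1) :
    Tendsto (tFN b q) atTop (𝓝 1) := by
  have h1q : (0:ℝ) < 1 - q := by linarith
  have hc : Continuous (fun u : ℝ => max 0 (min 1 ((u - q/2)/(1-q)))) := by
    apply Continuous.max continuous_const
    apply Continuous.min continuous_const
    exact (continuous_id.sub continuous_const).div_const _
  have h := (hc.tendsto 1).comp (tF_tendsto_atTop hb0 hb1)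
  have hval : max 0 (min 1 ((1 - q/2)/(1-q))) = 1 := by
    rw [min_eq_left, max_eq_right zero_le_one]
    rw [le_div_iff₀ h1q]
    linarith
  rw [hval] at h
  exact h

lemma tFN_tendsto_atBot (hb0 : 0 < b) (hb1 : b < 1) (hq0 : 0 ≤ q) (hq1 : q < 1) :
    Tendsto (tFN b q) atBot (𝓝 0) := by
  have h1q : (0:ℝ) < 1 - q := by linarith
  have hc : Continuous (fun u : ℝ => max 0 (min 1 ((u - q/2)/(1-q)))) := by
    apply Continuous.max continuous_const
    apply Continuous.min continuous_const
    exact (continuous_id.sub continuous_const).div_const _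
  have h := (hc.tendsto 0).comp (tF_tendsto_atBot hb0 hb1)
  have hval : max 0 (min 1 ((0 - q/2)/(1-q))) = 0 := by
    have hle : ((0:ℝ) - q/2)/(1-q) ≤ 0 := by
      apply div_nonpos_of_nonpos_of_nonneg <;> linarith
    rw [min_eq_right (by linarith), max_eq_left hle]
  rw [hval] at h
  exact h

lemma lintegral_shift {g : ℝ → ENNReal} (hg : Measurable g) (x z : ℝ) :
    ∫⁻ t in Iic z, g (t - x) = ∫⁻ t in Iic (z - x), g t := by
  have hmp : MeasurePreserving (fun t : ℝ => t + (-x)) volume volume :=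
    measurePreserving_add_right volume (-x)
  have hpre : (fun t : ℝ => t + (-x)) ⁻¹' (Iic (z - x)) = Iic z := by
    ext t
    simp only [mem_preimage, mem_Iic]
    constructor <;> intro <;> linarith
  have h := hmp.setLIntegral_comp_preimage (s := Iic (z - x)) measurableSet_Iic hg
  rw [hpre] at h
  rw [← h]
  apply lintegral_congr
  intro t
  rw [sub_eq_add_neg]

lemma lintegral_shift_univ {g : ℝ → ENNReal} (hg : Measurable g) (x : ℝ) :
    ∫⁻ t, g (t - x) = ∫⁻ t, g t := by
  have hmp : MeasurePreserving (fun t : ℝ => t + (-x)) volume volume :=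
    measurePreserving_add_right volume (-x)
  have h := hmp.lintegral_comp hg
  rw [← h]
  apply lintegral_congr
  intro t
  rw [sub_eq_add_neg]

noncomputable def mixcdf (n : ℕ) (b q θ : ℝ) (z : ℝ) : ℝ :=
  ∑ x ∈ Finset.range (n + 1), pm n θ x * tFN b q (z - x)

lemma lintegral_mix (hb0 : 0 < b) (hb1 : b < 1) (hq1 : q < 1) (n : ℕ) {θ : ℝ}
    (hθ0 : 0 ≤ θ) (hθ1 : θ ≤ 1) (μ : Measure ℝ) :
    ∫⁻ z, ENNReal.ofReal (∑ x ∈ Finset.range (n + 1), pm n θ x * tg b q (z - x)) ∂μ =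
      ∑ x ∈ Finset.range (n + 1), ENNReal.ofReal (pm n θ x) *
        ∫⁻ z, ENNReal.ofReal (tg b q (z - x)) ∂μ := by
  have hmeas : ∀ x : ℕ, Measurable (fun z : ℝ => ENNReal.ofReal (tg b q (z - x))) :=
    fun x => (measurable_tg hb0 hb1).comp (measurable_sub_const _)
  calc ∫⁻ z, ENNReal.ofReal (∑ x ∈ Finset.range (n + 1), pm n θ x * tg b q (z - x)) ∂μ
      = ∫⁻ z, ∑ x ∈ Finset.range (n + 1),
          ENNReal.ofReal (pm n θ x) * ENNReal.ofReal (tg b q (z - x)) ∂μ := by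
        apply lintegral_congr
        intro z
        rw [ENNReal.ofReal_sum_of_nonneg]
        · apply Finset.sum_congr rfl
          intro x _
          rw [ENNReal.ofReal_mul (pm_nonneg hθ0 hθ1)]
        · intro x _
          exact mul_nonneg (pm_nonneg hθ0 hθ1) (tg_nonneg hb0 hb1 hq1 _)
    _ = ∑ x ∈ Finset.range (n + 1), ENNReal.ofReal (pm n θ x) *
          ∫⁻ z, ENNReal.ofReal (tg b q (z - x)) ∂μ := by
        rw [lintegral_finset_sum]
        · apply Finset.sum_congr rfl
          intro x _
          rw [lintegral_const_mul _ (hmeas x)]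
        · intro x _
          exact (measurable_const.mul (hmeas x))

lemma mix_Iic (hb0 : 0 < b) (hb1 : b < 1) (hq0 : 0 ≤ q) (hq1 : q < 1) (n : ℕ) {θ : ℝ}
    (hθ0 : 0 ≤ θ) (hθ1 : θ ≤ 1) (z : ℝ) :
    (volume.withDensity fun t =>
        ENNReal.ofReal (∑ x ∈ Finset.range (n + 1), pm n θ x * tg b q (t - x))) (Iic z) =
      ENNReal.ofReal (mixcdf n b q θ z) := by
  rw [withDensity_apply _ measurableSet_Iic, lintegral_mix hb0 hb1 hq1 n hθ0 hθ1]
  have hterm : ∀ x ∈ Finset.range (n + 1),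
      ENNReal.ofReal (pm n θ x) * ∫⁻ t in Iic z, ENNReal.ofReal (tg b q (t - x)) =
        ENNReal.ofReal (pm n θ x * tFN b q (z - x)) := by
    intro x _
    rw [lintegral_shift (measurable_tg hb0 hb1) _ z, lintegral_tg_Iic hb0 hb1 hq0 hq1,
      ENNReal.ofReal_mul (pm_nonneg hθ0 hθ1)]
  rw [Finset.sum_congr rfl hterm, ← ENNReal.ofReal_sum_of_nonneg, mixcdf]
  intro x _
  exact mul_nonneg (pm_nonneg hθ0 hθ1) (tFN_nonneg _)

lemma mix_univ (hb0 : 0 < b) (hb1 : b < 1) (hq0 : 0 ≤ q) (hq1 : q < 1) (n : ℕ) {θ : ℝ}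
    (hθ0 : 0 ≤ θ) (hθ1 : θ ≤ 1) :
    (volume.withDensity fun t =>
        ENNReal.ofReal (∑ x ∈ Finset.range (n + 1), pm n θ x * tg b q (t - x))) univ = 1 := by
  rw [withDensity_apply _ MeasurableSet.univ, setLIntegral_univ,
    lintegral_mix hb0 hb1 hq1 n hθ0 hθ1]
  have hterm : ∀ x ∈ Finset.range (n + 1),
      ENNReal.ofReal (pm n θ x) * ∫⁻ t, ENNReal.ofReal (tg b q (t - x)) =
        ENNReal.ofReal (pm n θ x) := by
    intro x _
    rw [lintegral_shift_univ (measurable_tg hb0 hb1), lintegral_tg_univ hb0 hb1 hq0 hq1, mul_one]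
  rw [Finset.sum_congr rfl hterm, ← ENNReal.ofReal_sum_of_nonneg, pm_sum_one, ENNReal.ofReal_one]
  intro x _
  exact pm_nonneg hθ0 hθ1

lemma mixcdf_mono (hb0 : 0 < b) (hb1 : b < 1) (hq1 : q < 1) (n : ℕ) {θ : ℝ}
    (hθ0 : 0 ≤ θ) (hθ1 : θ ≤ 1) : Monotone (mixcdf n b q θ) := by
  intro z z' hz
  apply Finset.sum_le_sum
  intro x _
  apply mul_le_mul_of_nonneg_left _ (pm_nonneg hθ0 hθ1)
  exact tFN_mono hb0 hb1 hq1 (by linarith)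

lemma mixcdf_continuous (hb0 : 0 < b) (hb1 : b < 1) (n : ℕ) (θ : ℝ) :
    Continuous (mixcdf n b q θ) := by
  apply continuous_finset_sum
  intro x _
  exact continuous_const.mul ((tFN_continuous hb0 hb1).comp (continuous_id.sub continuous_const))

lemma mixcdf_tendsto_atTop (hb0 : 0 < b) (hb1 : b < 1) (hq0 : 0 ≤ q) (hq1 : q < 1) (n : ℕ)
    (θ : ℝ) : Tendsto (mixcdf n b q θ) atTop (𝓝 1) := by
  have h : Tendsto (mixcdf n b q θ) atTop (𝓝 (∑ x ∈ Finset.range (n + 1), pm n θ x * 1)) := by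
    apply tendsto_finset_sum
    intro x _
    apply Tendsto.const_mul
    have hshift : Tendsto (fun z : ℝ => z - (x:ℝ)) atTop atTop :=
      tendsto_atTop_add_const_right atTop (-(x:ℝ)) tendsto_id |>.congr
        (fun z => (sub_eq_add_neg z x).symm)
    exact (tFN_tendsto_atTop hb0 hb1 hq0 hq1).comp hshift
  have : (∑ x ∈ Finset.range (n + 1), pm n θ x * 1) = 1 := by
    simp only [mul_one]
    exact pm_sum_one n θ
  rwa [this] at h

lemma mixcdf_tendsto_atBot (hb0 : 0 < b) (hb1 : b < 1) (hq0 : 0 ≤ q) (hq1 : q < 1) (n : ℕ)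
    (θ : ℝ) : Tendsto (mixcdf n b q θ) atBot (𝓝 0) := by
  have h : Tendsto (mixcdf n b q θ) atBot (𝓝 (∑ x ∈ Finset.range (n + 1), pm n θ x * 0)) := by
    apply tendsto_finset_sum
    intro x _
    apply Tendsto.const_mul
    have hshift : Tendsto (fun z : ℝ => z - (x:ℝ)) atBot atBot :=
      tendsto_atBot_add_const_right atBot (-(x:ℝ)) tendsto_id |>.congr
        (fun z => (sub_eq_add_neg z x).symm)
    exact (tFN_tendsto_atBot hb0 hb1 hq0 hq1).comp hshift
  have : (∑ x ∈ Finset.range (n + 1), pm n θ x * 0) = 0 := by simp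
  rwa [this] at h

lemma level_sSup {G : ℝ → ℝ} {β : ℝ} (hcont : Continuous G) (hmono : Monotone G)
    (hSne : {z | G z < β}.Nonempty) (hbd : BddAbove {z | G z < β}) :
    G (sSup {z | G z < β}) = β := by
  set u := sSup {z | G z < β} with hu
  have h1 : ∀ z, z < u → G z < β := by
    intro z hz
    obtain ⟨w, hw, hzw⟩ := exists_lt_of_lt_csSup hSne hz
    exact lt_of_le_of_lt (hmono hzw.le) hw
  have h2 : ∀ z, u < z → β ≤ G z := by
    intro z hz
    by_contra hc
    push_neg at hc
    exact absurd (le_csSup hbd hc) (not_le.mpr hz)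
  have hge : β ≤ G u := by
    by_contra hc
    push_neg at hc
    have hev := Filter.Tendsto.eventually_lt_const hc (hcont.continuousAt (x := u))
    obtain ⟨z, hz1, hz2⟩ := ((hev.filter_mono (nhdsWithin_le_nhds (s := Ioi u))).and
      eventually_mem_nhdsWithin).exists
    exact absurd (h2 z hz2) (not_le.mpr hz1)
  have hle : G u ≤ β := by
    by_contra hc
    push_neg at hc
    have hev := Filter.Tendsto.eventually_const_lt hc (hcont.continuousAt (x := u))
    obtain ⟨z, hz1, hz2⟩ := ((hev.filter_mono (nhdsWithin_le_nhds (s := Iio u))).and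
      eventually_mem_nhdsWithin).exists
    exact absurd (h1 z hz2) (not_lt.mpr hz1.le)
  linarith

lemma level_measure_le {ν : Measure ℝ} {G H : ℝ → ℝ} {β : ℝ}
    (hcont : Continuous G) (hmono : Monotone G)
    (hbot : Tendsto G atBot (𝓝 0)) (htop : Tendsto G atTop (𝓝 1))
    (hGH : ∀ z, G z ≤ H z)
    (hν : ∀ z, ν (Iic z) = ENNReal.ofReal (H z))
    (hνuniv : ν univ = 1) (hatom : ∀ u : ℝ, ν {u} = 0)
    (hβ0 : 0 ≤ β) (hβ1 : β ≤ 1) :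
    ν {z | β ≤ G z} ≤ 1 - ENNReal.ofReal β := by
  by_cases hne : {z | G z < β}.Nonempty
  · by_cases hbd : BddAbove {z | G z < β}
    · set u := sSup {z | G z < β} with hu
      have hGu : G u = β := level_sSup hcont hmono hne hbd
      have hsub : {z | β ≤ G z} ⊆ Ici u := by
        intro z hz
        by_contra hzu
        simp only [mem_Ici, not_le] at hzu
        obtain ⟨w, hw, hzw⟩ := exists_lt_of_lt_csSup hne hzu
        exact absurd hz (not_le.mpr (lt_of_le_of_lt (hmono hzw.le) hw))
      have hIic_ne_top : ν (Iic u) ≠ ⊤ := by rw [hν]; exact ENNReal.ofReal_ne_top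
      have hIio : ν (Iio u) = ENNReal.ofReal (H u) := by
        rw [measure_congr (Iio_ae_eq_Iic' (hatom u))]
        exact hν u
      have hIio_ne_top : ν (Iio u) ≠ ⊤ := by rw [hIio]; exact ENNReal.ofReal_ne_top
      calc ν {z | β ≤ G z} ≤ ν (Ici u) := measure_mono hsub
        _ = ν univ - ν (Iio u) := by
            rw [← compl_Iio, measure_compl measurableSet_Iio hIio_ne_top]
        _ ≤ 1 - ENNReal.ofReal β := by
            rw [hνuniv, hIio]
            apply tsub_le_tsub_left
            apply ENNReal.ofReal_le_ofReal
            rw [← hGu]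
            exact hGH u
    · have hempty : {z | β ≤ G z} = ∅ := by
        apply eq_empty_iff_forall_notMem.mpr
        intro z hz
        obtain ⟨w, hw, hzw⟩ := not_bddAbove_iff.mp hbd z
        exact absurd hz (not_le.mpr (lt_of_le_of_lt (hmono hzw.le) hw))
      rw [hempty, measure_empty]
      exact zero_le
  · have hβ : β ≤ 0 := by
      by_contra hc
      push_neg at hc
      obtain ⟨z, hz⟩ := (hbot.eventually_lt_const hc).exists
      exact hne ⟨z, hz⟩
    have hβ' : β = 0 := le_antisymm hβ hβ0
    subst hβ'
    rw [ENNReal.ofReal_zero, tsub_zero, ← hνuniv]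
    exact measure_mono (subset_univ _)

lemma level_measure_eq {ν : Measure ℝ} {G : ℝ → ℝ} {β : ℝ}
    (hcont : Continuous G) (hmono : Monotone G)
    (hbot : Tendsto G atBot (𝓝 0)) (htop : Tendsto G atTop (𝓝 1))
    (hν : ∀ z, ν (Iic z) = ENNReal.ofReal (G z))
    (hνuniv : ν univ = 1) (hatom : ∀ u : ℝ, ν {u} = 0)
    (hβ0 : 0 ≤ β) (hβ1 : β ≤ 1) :
    ν {z | β ≤ G z} = 1 - ENNReal.ofReal β := by
  by_cases hne : {z | G z < β}.Nonempty
  · by_cases hbd : BddAbove {z | G z < β}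
    · set u := sSup {z | G z < β} with hu
      have hGu : G u = β := level_sSup hcont hmono hne hbd
      apply le_antisymm
      · exact level_measure_le hcont hmono hbot htop (fun z => le_refl _) hν hνuniv hatom hβ0 hβ1
      · have hsub : Ioi u ⊆ {z | β ≤ G z} := by
          intro z hz
          by_contra hc
          simp only [mem_setOf_eq, not_le] at hc
          exact absurd (le_csSup hbd (show z ∈ {z | G z < β} from hc)) (not_le.mpr hz)
        have hIic_ne_top : ν (Iic u) ≠ ⊤ := by rw [hν]; exact ENNReal.ofReal_ne_top
        calc 1 - ENNReal.ofReal β = ν univ - ν (Iic u) := by rw [hνuniv, hν, hGu]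
          _ = ν (Ioi u) := by
              rw [← compl_Iic, measure_compl measurableSet_Iic hIic_ne_top]
          _ ≤ ν {z | β ≤ G z} := measure_mono hsub
    · have hempty : {z | β ≤ G z} = ∅ := by
        apply eq_empty_iff_forall_notMem.mpr
        intro z hz
        obtain ⟨w, hw, hzw⟩ := not_bddAbove_iff.mp hbd z
        exact absurd hz (not_le.mpr (lt_of_le_of_lt (hmono hzw.le) hw))
      have hβ1' : (1:ℝ) ≤ β := by
        have hall : ∀ z, G z ≤ β := by
          intro z
          obtain ⟨w, hw, hzw⟩ := not_bddAbove_iff.mp hbd z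
          exact (lt_of_le_of_lt (hmono hzw.le) hw).le
        exact le_of_tendsto htop (Eventually.of_forall hall)
      have hβ' : β = 1 := le_antisymm hβ1 hβ1'
      subst hβ'
      rw [hempty, measure_empty, ENNReal.ofReal_one, tsub_self]
  · have hβ : β ≤ 0 := by
      by_contra hc
      push_neg at hc
      obtain ⟨z, hz⟩ := (hbot.eventually_lt_const hc).exists
      exact hne ⟨z, hz⟩
    have hβ' : β = 0 := le_antisymm hβ hβ0
    subst hβ'
    have huniv : {z | (0:ℝ) ≤ G z} = univ := by
      apply eq_univ_iff_forall.mpr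
      intro z
      exact hmono.le_of_tendsto hbot z
    rw [huniv, hνuniv, ENNReal.ofReal_zero, tsub_zero]

end Stmt15

open Stmt15 in
theorem stmt_15 (n : ℕ) (ε δ : ℝ) (hε : 0 < ε) (hδ : 0 ≤ δ)
    (b q : ℝ) (hb : b = Real.exp (-ε)) (hq : q = 2 * δ * b / (1 - b + 2 * δ * b))
    (θ₀ : ℝ) (hθ₀0 : 0 < θ₀) (hθ₀1 : θ₀ < 1)
    (F₀ FN : ℝ → ℝ)
    (hF₀ : ∀ x : ℝ, F₀ x = ∑' l : ℤ,
      ((1 - b) / (1 + b)) * b ^ l.natAbs * max 0 (min 1 (x - l + 1 / 2)))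
    (hFN : ∀ x : ℝ, FN x = max 0 (min 1 ((F₀ x - q / 2) / (1 - q))))
    (dens : ℝ → ℝ → ℝ)
    (hdens : ∀ (θ : ℝ) (z : ℝ), dens θ z = ∑ x ∈ Finset.range (n + 1),
      ((n.choose x : ℝ) * θ ^ x * (1 - θ) ^ (n - x)) *
        (if q / 2 ≤ F₀ (z - (x : ℝ)) ∧ F₀ (z - (x : ℝ)) ≤ 1 - q / 2 then
          ((1 - b) / (1 + b)) * b ^ (round (z - (x : ℝ))).natAbs / (1 - q) else 0))
    (P : ℝ → Measure ℝ)
    (hP : ∀ θ : ℝ, P θ = volume.withDensity (fun z => ENNReal.ofReal (dens θ z)))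
    (FZ : ℝ → ℝ)
    (hFZ : ∀ z : ℝ, FZ z = ∑ x ∈ Finset.range (n + 1),
      ((n.choose x : ℝ) * θ₀ ^ x * (1 - θ₀) ^ (n - x)) * FN (z - (x : ℝ))) :
    (∀ α : ℝ, 0 ≤ α → α ≤ 1 → (P θ₀ {z | 1 - FZ z ≤ α}).toReal = α) ∧
    (∀ θ : ℝ, 0 < θ → θ ≤ θ₀ → ∀ α : ℝ, 0 ≤ α → α ≤ 1 →
      (P θ {z | 1 - FZ z ≤ α}).toReal ≤ α) := by
  have hb0 : 0 < b := by rw [hb]; exact Real.exp_pos _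
  have hb1 : b < 1 := by rw [hb]; exact Real.exp_lt_one_iff.mpr (by linarith)
  have hδb : 0 ≤ 2 * δ * b := by positivity
  have hden : 0 < 1 - b + 2 * δ * b := by linarith
  have hq0 : 0 ≤ q := by rw [hq]; exact div_nonneg hδb hden.le
  have hq1 : q < 1 := by
    rw [hq, div_lt_one hden]
    linarith
  have hF0eq : F₀ = tF b := funext hF₀
  have hFNeq : FN = tFN b q := by
    funext x
    rw [hFN x, hF0eq]
    rfl
  have hPeq : ∀ θ : ℝ, P θ = volume.withDensity
      (fun z => ENNReal.ofReal (∑ x ∈ Finset.range (n + 1), pm n θ x * tg b q (z - (x : ℝ)))) := by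
    intro θ
    rw [hP]
    congr 1
    funext z
    rw [hdens]
    congr 1
    apply Finset.sum_congr rfl
    intro x _
    rw [hF0eq]
    rfl
  have hFZeq : FZ = mixcdf n b q θ₀ := by
    funext z
    rw [hFZ, hFNeq]
    rfl
  have hset : ∀ α : ℝ, {z : ℝ | 1 - FZ z ≤ α} = {z : ℝ | (1 - α) ≤ mixcdf n b q θ₀ z} := by
    intro α
    ext z
    rw [hFZeq]
    simp only [Set.mem_setOf_eq]
    constructor <;> intro <;> linarith
  have hcont := mixcdf_continuous (q := q) hb0 hb1 n θ₀
  have hmono := mixcdf_mono hb0 hb1 hq1 n hθ₀0.le hθ₀1.le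
  have hbot := mixcdf_tendsto_atBot hb0 hb1 hq0 hq1 n θ₀
  have htop := mixcdf_tendsto_atTop hb0 hb1 hq0 hq1 n θ₀
  have hν : ∀ θ : ℝ, 0 ≤ θ → θ ≤ 1 → ∀ z : ℝ,
      P θ (Set.Iic z) = ENNReal.ofReal (mixcdf n b q θ z) := by
    intro θ h0 h1 z
    rw [hPeq]
    exact mix_Iic hb0 hb1 hq0 hq1 n h0 h1 z
  have hu : ∀ θ : ℝ, 0 ≤ θ → θ ≤ 1 → P θ Set.univ = 1 := by
    intro θ h0 h1
    rw [hPeq]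
    exact mix_univ hb0 hb1 hq0 hq1 n h0 h1
  have hatom : ∀ θ : ℝ, ∀ u : ℝ, P θ {u} = 0 := by
    intro θ u
    rw [hPeq]
    exact withDensity_absolutelyContinuous volume _ (by rw [Real.volume_singleton])
  constructor
  · intro α hα0 hα1
    rw [hset α]
    rw [level_measure_eq hcont hmono hbot htop (hν θ₀ hθ₀0.le hθ₀1.le) (hu θ₀ hθ₀0.le hθ₀1.le)
      (hatom θ₀) (by linarith) (by linarith)]
    rw [ENNReal.toReal_sub_of_le (ENNReal.ofReal_le_one.mpr (by linarith)) ENNReal.one_ne_top]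
    rw [ENNReal.toReal_one, ENNReal.toReal_ofReal (by linarith)]
    ring
  · intro θ hθ0 hθθ₀ α hα0 hα1
    have hθ1 : θ ≤ 1 := le_trans hθθ₀ hθ₀1.le
    have hGH : ∀ z : ℝ, mixcdf n b q θ₀ z ≤ mixcdf n b q θ z := by
      intro z
      apply pm_sum_antitone n hθ0.le hθθ₀ hθ₀1.le (g := fun x : ℕ => tFN b q (z - (x : ℝ)))
      intro k
      apply tFN_mono hb0 hb1 hq1
      push_cast
      linarith
    have hle := level_measure_le hcont hmono hbot htop hGH (hν θ hθ0.le hθ1) (hu θ hθ0.le hθ1)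
      (hatom θ) (show (0:ℝ) ≤ 1 - α by linarith) (show (1:ℝ) - α ≤ 1 by linarith)
    rw [hset α]
    have hfin : (1 - ENNReal.ofReal (1 - α)) ≠ ⊤ :=
      ne_top_of_le_ne_top ENNReal.one_ne_top tsub_le_self
    have h2 := ENNReal.toReal_mono hfin hle
    rw [ENNReal.toReal_sub_of_le (ENNReal.ofReal_le_one.mpr (by linarith)) ENNReal.one_ne_top,
      ENNReal.toReal_one, ENNReal.toReal_ofReal (by linarith)] at h2
    linarith
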